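/- The matrix A₁ = [[5,-4],[4,-3]] satisfies A₁ = U²L⁻²U²L⁻² where U = [[1,1],[0,1]], L = [[1,0],[1,1]], and A₁ fixes the vector (1,1). Moreover, every matrix A ∈ SL₂(ℤ) of the form [[4k+1, 2n],[2m, 4ℓ+1]] fixing (1,1) is a power of A₁: A = A₁ᵐ for some m ∈ ℤ, with Aₘ = [[4m+1, -4m],[4m, 1-4m]]. -/

import Mathlib

open Matrix

/-- `U = [[1,1],[0,1]]` in `SL₂(ℤ)`. -/
def Umat : Matrix.SpecialLinearGroup (Fin 2) ℤ :=
  ⟨!![1, 1; 0, 1], by norm_num [Matrix.det_fin_two_of]⟩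

/-- `L = [[1,0],[1,1]]` in `SL₂(ℤ)`. -/
def Lmat : Matrix.SpecialLinearGroup (Fin 2) ℤ :=
  ⟨!![1, 0; 1, 1], by norm_num [Matrix.det_fin_two_of]⟩

/-- `A₁ = [[5,-4],[4,-3]]` in `SL₂(ℤ)`. -/
def A1 : Matrix.SpecialLinearGroup (Fin 2) ℤ :=
  ⟨!![5, -4; 4, -3], by norm_num [Matrix.det_fin_two_of]⟩

lemma Linv : Lmat⁻¹ = ⟨!![1, 0; -1, 1], by norm_num [Matrix.det_fin_two_of]⟩ := by
  apply Subtype.ext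
  simp only [Matrix.SpecialLinearGroup.coe_inv, Matrix.adjugate_fin_two]
  ext i j
  fin_cases i <;> fin_cases j <;>
    simp [Lmat]

lemma A1inv : A1⁻¹ = ⟨!![-3, 4; -4, 5], by norm_num [Matrix.det_fin_two_of]⟩ := by
  apply Subtype.ext
  simp only [Matrix.SpecialLinearGroup.coe_inv, Matrix.adjugate_fin_two]
  ext i j
  fin_cases i <;> fin_cases j <;>
    simp [A1]

lemma A1pow (m : ℤ) : (A1 ^ m).1 = !![4 * m + 1, -4 * m; 4 * m, 1 - 4 * m] := by
  induction m using Int.induction_on with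
  | zero => ext i j; fin_cases i <;> fin_cases j <;> simp
  | succ k ih =>
      have h : (A1 ^ ((k : ℤ) + 1)).1 = (A1 ^ (k : ℤ)).1 * A1.1 := by
        rw [_root_.zpow_add_one, Matrix.SpecialLinearGroup.coe_mul]
      rw [h, ih]
      ext i j
      fin_cases i <;> fin_cases j <;>
        simp [A1, Matrix.mul_apply, Fin.sum_univ_two] <;> ring
  | pred k ih =>
      have h : (A1 ^ (-(k : ℤ) - 1)).1 = (A1 ^ (-(k : ℤ))).1 * (A1⁻¹).1 := by
        rw [sub_eq_add_neg, _root_.zpow_add, _root_.zpow_neg_one,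
          Matrix.SpecialLinearGroup.coe_mul]
      rw [h, ih, A1inv]
      ext i j
      fin_cases i <;> fin_cases j <;>
        simp [Matrix.mul_apply, Fin.sum_univ_two] <;> ring

theorem stmt15 :
    A1 = Umat ^ 2 * Lmat ^ (-2 : ℤ) * Umat ^ 2 * Lmat ^ (-2 : ℤ) ∧
    A1.1.mulVec ![1, 1] = ![1, 1] ∧
    ∀ A : Matrix.SpecialLinearGroup (Fin 2) ℤ,
      (A.1 0 0 % 4 = 1 ∧ A.1 1 1 % 4 = 1 ∧ Even (A.1 0 1) ∧ Even (A.1 1 0)) →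
      A.1.mulVec ![1, 1] = ![1, 1] →
      ∃ m : ℤ, A = A1 ^ m ∧ A.1 = !![4 * m + 1, -4 * m; 4 * m, 1 - 4 * m] := by
  refine ⟨?_, ?_, ?_⟩
  · have h2 : Lmat ^ (-2 : ℤ) = Lmat⁻¹ * Lmat⁻¹ := by
      rw [show (-2 : ℤ) = -1 + -1 by norm_num, _root_.zpow_add, _root_.zpow_neg_one]
    rw [h2]
    ext i j
    simp only [Matrix.SpecialLinearGroup.coe_inv, Matrix.SpecialLinearGroup.coe_mul, Matrix.SpecialLinearGroup.coe_pow]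
    fin_cases i <;> fin_cases j <;>
      simp [A1, Umat, Lmat, sq, Matrix.adjugate_fin_two, Matrix.mul_apply, Fin.sum_univ_two]
  · funext i
    fin_cases i <;> simp [A1, Matrix.mulVec, dotProduct, Fin.sum_univ_two]
  · rintro A ⟨h00, h11, -, -⟩ hfix
    set a := A.1 0 0 with ha
    have hdet : A.1 0 0 * A.1 1 1 - A.1 0 1 * A.1 1 0 = 1 := by
      have := A.2
      rw [Matrix.det_fin_two] at this
      linarith
    have hr0 : A.1 0 0 + A.1 0 1 = 1 := by
      have := congrFun hfix 0
      simpa [Matrix.mulVec, dotProduct, Fin.sum_univ_two, Matrix.vecHead, Matrix.vecTail] using this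
    have hr1 : A.1 1 0 + A.1 1 1 = 1 := by
      have := congrFun hfix 1
      simpa [Matrix.mulVec, dotProduct, Fin.sum_univ_two, Matrix.vecHead, Matrix.vecTail] using this
    have hb : A.1 0 1 = 1 - A.1 0 0 := by linarith
    have hc : A.1 1 0 = 1 - A.1 1 1 := by linarith
    rw [hb, hc] at hdet
    have htr : A.1 0 0 + A.1 1 1 = 2 := by nlinarith [hdet]
    have h4 : (4 : ℤ) ∣ A.1 0 0 - 1 := by omega
    obtain ⟨m, hm⟩ := h4
    have hA : A.1 = !![4 * m + 1, -4 * m; 4 * m, 1 - 4 * m] := by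
      ext i j
      fin_cases i <;> fin_cases j <;> simp <;> omega
    exact ⟨m, Subtype.ext (hA.trans (A1pow m).symm), hA⟩
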